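/- Fix ε̄ > 0 and U₀ > 0. For the one-dimensional Kepler problem with potential U₀/r, the energy of the unique solution joining 0 to r in time 1+ε satisfies h(0,r;1+ε) = (1/2)(r/(1+ε))² + o(r²) as r → ∞, uniformly for ε ∈ [0,ε̄]. -/

import Mathlib

open Set

noncomputable def kepT (a b x : ℝ) : ℝ :=
  Real.sqrt (x*(a*x+b)) / a - b / (a * Real.sqrt a) * Real.arsinh (Real.sqrt (a*x/b))

lemma kepT_zero (a b : ℝ) : kepT a b 0 = 0 := by
  simp [kepT]

lemma kepT_hasDerivAt {a b x : ℝ} (ha : 0 < a) (hb : 0 < b) (hx : 0 < x) :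
    HasDerivAt (kepT a b) (Real.sqrt x / Real.sqrt (a*x+b)) x := by
  have haxb : 0 < a*x+b := by positivity
  have hp : HasDerivAt (fun y => y*(a*y+b)) (1*(a*x+b) + x*a) x := by
    simpa using (hasDerivAt_id x).fun_mul (((hasDerivAt_id x).const_mul a).add_const b)
  have hpne : x*(a*x+b) ≠ 0 := by positivity
  have h1 : HasDerivAt (fun y => Real.sqrt (y*(a*y+b)) / a)
      ((1/(2*Real.sqrt (x*(a*x+b))) * (1*(a*x+b) + x*a)) / a) x :=
    ((Real.hasDerivAt_sqrt hpne).comp x hp).div_const a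
  have hq : HasDerivAt (fun y => a*y/b) (a/b) x := by
    simpa using ((hasDerivAt_id x).const_mul a).div_const b
  have hqne : a*x/b ≠ 0 := by positivity
  have h2 : HasDerivAt (fun y => Real.sqrt (a*y/b)) (1/(2*Real.sqrt (a*x/b)) * (a/b)) x :=
    (Real.hasDerivAt_sqrt hqne).comp x hq
  have h3 : HasDerivAt (fun y => Real.arsinh (Real.sqrt (a*y/b)))
      ((Real.sqrt (1 + (Real.sqrt (a*x/b))^2))⁻¹ * (1/(2*Real.sqrt (a*x/b)) * (a/b))) x :=
    (Real.hasDerivAt_arsinh _).comp x h2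
  have h4 := h1.sub (h3.const_mul (b / (a * Real.sqrt a)))
  have key : (1/(2*Real.sqrt (x*(a*x+b))) * (1*(a*x+b) + x*a)) / a
      - b / (a * Real.sqrt a) * ((Real.sqrt (1 + (Real.sqrt (a*x/b))^2))⁻¹
          * (1/(2*Real.sqrt (a*x/b)) * (a/b)))
      = Real.sqrt x / Real.sqrt (a*x+b) := by
    have e2 : (Real.sqrt (a*x/b))^2 = a*x/b := Real.sq_sqrt (by positivity)
    rw [e2]
    have e1 : Real.sqrt (x*(a*x+b)) = Real.sqrt x * Real.sqrt (a*x+b) := Real.sqrt_mul hx.le _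
    have e3 : Real.sqrt (a*x/b) = Real.sqrt a * Real.sqrt x / Real.sqrt b := by
      rw [Real.sqrt_div (by positivity), Real.sqrt_mul ha.le]
    have e4 : Real.sqrt (1 + a*x/b) = Real.sqrt (a*x+b) / Real.sqrt b := by
      rw [show 1 + a*x/b = (a*x+b)/b by field_simp; ring, Real.sqrt_div haxb.le]
    rw [e1, e3, e4]
    have hs1 : 0 < Real.sqrt x := Real.sqrt_pos.2 hx
    have hs2 : 0 < Real.sqrt (a*x+b) := Real.sqrt_pos.2 haxb
    have hs3 : 0 < Real.sqrt a := Real.sqrt_pos.2 ha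
    have hs4 : 0 < Real.sqrt b := Real.sqrt_pos.2 hb
    have q1 : Real.sqrt x ^ 2 = x := Real.sq_sqrt hx.le
    have q2 : Real.sqrt (a*x+b) ^ 2 = a*x+b := Real.sq_sqrt haxb.le
    have q3 : Real.sqrt a ^ 2 = a := Real.sq_sqrt ha.le
    have q4 : Real.sqrt b ^ 2 = b := Real.sq_sqrt hb.le
    set s1 := Real.sqrt x; set s2 := Real.sqrt (a*x+b); set s3 := Real.sqrt a
    set s4 := Real.sqrt b
    rw [← q1, ← q3, ← q4] at *
    field_simp
    ring
  rw [← key]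
  exact h4


lemma kepT_continuous (a b : ℝ) : Continuous (kepT a b) := by
  unfold kepT
  exact ((Real.continuous_sqrt.comp (by continuity)).div_const a).sub
    (continuous_const.mul (Real.continuous_arsinh.comp
      (Real.continuous_sqrt.comp (by continuity))))

lemma kepT_continuousAt_param {a : ℝ} (b r : ℝ) (ha : 0 < a) :
    ContinuousAt (fun a => kepT a b r) a := by
  have h1 : ContinuousAt (fun a : ℝ => Real.sqrt (r*(a*r+b)) / a) a :=
    ((Real.continuous_sqrt.comp (by continuity)).continuousAt).div continuousAt_id ha.ne'
  have h2 : ContinuousAt (fun a : ℝ => b / (a * Real.sqrt a)) a := by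
    refine continuousAt_const.div ((continuous_id.mul Real.continuous_sqrt).continuousAt) ?_
    have := Real.sqrt_pos.2 ha
    positivity
  have h3 : ContinuousAt (fun a : ℝ => Real.arsinh (Real.sqrt (a*r/b))) a :=
    (Real.continuous_arsinh.comp (Real.continuous_sqrt.comp (by continuity))).continuousAt
  exact h1.sub (h2.mul h3)

lemma kepT_strictMonoOn {a b : ℝ} (ha : 0 < a) (hb : 0 < b) :
    StrictMonoOn (kepT a b) (Ici 0) := by
  refine strictMonoOn_of_deriv_pos (convex_Ici 0) (kepT_continuous a b).continuousOn ?_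
  intro x hx
  rw [interior_Ici] at hx
  have hx' : 0 < x := hx
  rw [(kepT_hasDerivAt ha hb hx).deriv]
  have h1 : 0 < a*x+b := by positivity
  have h2 := Real.sqrt_pos.2 hx
  have h3 := Real.sqrt_pos.2 h1
  positivity

lemma kepT_nonneg {a b : ℝ} (ha : 0 < a) (hb : 0 < b) {x : ℝ} (hx : 0 ≤ x) :
    0 ≤ kepT a b x := by
  rcases hx.eq_or_lt with h | h
  · rw [← h, kepT_zero]
  · rw [← kepT_zero a b]
    exact ((kepT_strictMonoOn ha hb) self_mem_Ici (le_of_lt h) h).le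

lemma kepT_le {a b : ℝ} (ha : 0 < a) (hb : 0 < b) {x : ℝ} (hx : 0 ≤ x) :
    kepT a b x ≤ x / Real.sqrt a := by
  have hsa : 0 < Real.sqrt a := Real.sqrt_pos.2 ha
  have hmono : MonotoneOn (fun y => y / Real.sqrt a - kepT a b y) (Ici 0) := by
    refine monotoneOn_of_deriv_nonneg (convex_Ici 0)
      ((continuous_id.div_const _).sub (kepT_continuous a b)).continuousOn ?_ ?_
    · intro y hy
      rw [interior_Ici] at hy
      exact (((hasDerivAt_id' (x := y)).div_const _).sub
        (kepT_hasDerivAt ha hb hy)).differentiableAt.differentiableWithinAt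
    · intro y hy
      rw [interior_Ici] at hy
      have hy' : (0:ℝ) < y := hy
      rw [(((hasDerivAt_id' (x := y)).div_const _).fun_sub (kepT_hasDerivAt ha hb hy)).deriv]
      have hayb : (0:ℝ) < a*y+b := by positivity
      have h2 : Real.sqrt y / Real.sqrt (a*y+b) ≤ 1 / Real.sqrt a := by
        rw [div_le_div_iff₀ (Real.sqrt_pos.2 hayb) hsa]
        rw [one_mul, ← Real.sqrt_mul hy'.le a]
        apply Real.sqrt_le_sqrt; nlinarith
      linarith
  have h0 : (0:ℝ) ∈ Ici (0:ℝ) := self_mem_Ici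
  have := hmono h0 hx hx
  simp only [kepT_zero, zero_div, sub_zero] at this
  linarith [this]

lemma kepT_ge {a b : ℝ} (ha : 0 < a) (hb : 0 < b) {x : ℝ} (hx : 1 ≤ x) :
    (x - 1) / (Real.sqrt a + Real.sqrt b) ≤ kepT a b x := by
  have hsa : 0 < Real.sqrt a := Real.sqrt_pos.2 ha
  have hsb : 0 < Real.sqrt b := Real.sqrt_pos.2 hb
  have hsab : 0 < Real.sqrt a + Real.sqrt b := by positivity
  have hmono : MonotoneOn (fun y => kepT a b y - (y-1)/(Real.sqrt a + Real.sqrt b)) (Ici 1) := by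
    refine monotoneOn_of_deriv_nonneg (convex_Ici 1)
      ((kepT_continuous a b).sub ((continuous_id.sub continuous_const).div_const _)).continuousOn
      ?_ ?_
    · intro y hy
      rw [interior_Ici] at hy
      have hy0 : (0:ℝ) < y := lt_trans one_pos hy
      exact ((kepT_hasDerivAt ha hb hy0).sub
        (((hasDerivAt_id' (x := y)).sub_const 1).div_const _)).differentiableAt.differentiableWithinAt
    · intro y hy
      rw [interior_Ici] at hy
      have hy0 : (0:ℝ) < y := lt_trans one_pos hy
      rw [((kepT_hasDerivAt ha hb hy0).fun_sub
        (((hasDerivAt_id' (x := y)).sub_const 1).div_const _)).deriv]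
      have hayb : (0:ℝ) < a*y+b := by positivity
      have h2 : 1 / (Real.sqrt a + Real.sqrt b) ≤ Real.sqrt y / Real.sqrt (a*y+b) := by
        rw [div_le_div_iff₀ hsab (Real.sqrt_pos.2 hayb)]
        have key : Real.sqrt (a*y+b) ≤ Real.sqrt y * (Real.sqrt a + Real.sqrt b) := by
          have h3 : Real.sqrt (a*y+b) ≤ Real.sqrt (y * (Real.sqrt a + Real.sqrt b)^2) := by
            apply Real.sqrt_le_sqrt
            have e1 : Real.sqrt a ^ 2 = a := Real.sq_sqrt ha.le
            have e2 : Real.sqrt b ^ 2 = b := Real.sq_sqrt hb.le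
            have hy1 : (1:ℝ) < y := hy
            nlinarith [mul_pos hsa hsb, mul_nonneg (mul_pos hsa hsb).le hy0.le]
          rwa [Real.sqrt_mul (by linarith : (0:ℝ) ≤ y),
            Real.sqrt_sq hsab.le] at h3
        linarith
      linarith
  have h1 : (1:ℝ) ∈ Ici (1:ℝ) := self_mem_Ici
  have := hmono h1 hx hx
  simp only [sub_self, zero_div, sub_zero] at this
  have h4 : 0 ≤ kepT a b 1 := kepT_nonneg ha hb (by norm_num)
  linarith [this]

/-- Extension of `kepT` to all of `ℝ`, strictly monotone. -/
noncomputable def kepTe (a b x : ℝ) : ℝ := if x < 0 then x else kepT a b x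

lemma kepTe_of_nonneg {a b x : ℝ} (hx : 0 ≤ x) : kepTe a b x = kepT a b x := by
  simp [kepTe, not_lt.2 hx]

lemma kepTe_strictMono {a b : ℝ} (ha : 0 < a) (hb : 0 < b) :
    StrictMono (kepTe a b) := by
  intro x y hxy
  rcases lt_or_ge x 0 with hx | hx
  · rcases lt_or_ge y 0 with hy | hy
    · simpa [kepTe, hx, hy] using hxy
    · rw [kepTe, if_pos hx, kepTe_of_nonneg hy]
      exact lt_of_lt_of_le hx (kepT_nonneg ha hb hy)
  · have hy : 0 ≤ y := le_trans hx hxy.le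
    rw [kepTe_of_nonneg hx, kepTe_of_nonneg hy]
    exact kepT_strictMonoOn ha hb hx hy hxy

lemma kepTe_surjective {a b : ℝ} (ha : 0 < a) (hb : 0 < b) :
    Function.Surjective (kepTe a b) := by
  intro t
  rcases lt_or_ge t 0 with ht | ht
  · exact ⟨t, by simp [kepTe, ht]⟩
  · have hsab : 0 < Real.sqrt a + Real.sqrt b := by
      have := Real.sqrt_pos.2 ha; have := Real.sqrt_pos.2 hb; positivity
    set M : ℝ := 1 + (Real.sqrt a + Real.sqrt b) * t with hM
    have hM1 : (1:ℝ) ≤ M := by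
      have : 0 ≤ (Real.sqrt a + Real.sqrt b) * t := mul_nonneg hsab.le ht
      linarith
    have hMt : t ≤ kepT a b M := by
      have h1 := kepT_ge ha hb hM1
      have h2 : (M - 1) / (Real.sqrt a + Real.sqrt b) = t := by
        rw [hM]; field_simp; ring
      linarith [h2 ▸ h1]
    have h0M : (0:ℝ) ≤ M := by linarith
    have := intermediate_value_Icc h0M (kepT_continuous a b).continuousOn
    have hmem : t ∈ Icc (kepT a b 0) (kepT a b M) := by
      rw [kepT_zero]; exact ⟨ht, hMt⟩
    obtain ⟨x, hx, hxt⟩ := this hmem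
    exact ⟨x, by rw [kepTe_of_nonneg hx.1]; exact hxt⟩

/-- `IsKeplerArcTime U₀ a b s r` : `r` is a solution arc of `r'' = -U₀/r²`
joining `a` to `b` in time `s`, positive in the interior. -/
def IsKeplerArcTime (U₀ a b s : ℝ) (r : ℝ → ℝ) : Prop :=
  r 0 = a ∧ r s = b ∧ ContinuousOn r (Icc 0 s) ∧
    ∀ t ∈ Ioo 0 s, 0 < r t ∧ deriv (deriv r) t = -U₀ / (r t) ^ 2


/-- Existence of an arc with controlled energy. -/
lemma kepler_exists (U₀ : ℝ) (hU₀ : 0 < U₀) (s r : ℝ) (hs : 1 ≤ s)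
    (hr : 1 + s * (1 + Real.sqrt (2*U₀)) ≤ r) :
    ∃ a : ℝ, 0 < a ∧ s * Real.sqrt a ≤ r ∧
      r - 1 ≤ s * (Real.sqrt a + Real.sqrt (2*U₀)) ∧
      ∃ ρ : ℝ → ℝ, IsKeplerArcTime U₀ 0 r s ρ ∧
        ∀ t ∈ Ioo 0 s, (deriv ρ t) ^ 2 / 2 - U₀ / ρ t = a / 2 := by
  set b : ℝ := 2*U₀ with hbdef
  have hb : 0 < b := by positivity
  have hsb : 0 ≤ Real.sqrt b := Real.sqrt_nonneg b
  have hs0 : 0 < s := lt_of_lt_of_le one_pos hs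
  have hr1 : 1 ≤ r := by nlinarith
  have hr0 : 0 < r := lt_of_lt_of_le one_pos hr1
  -- find the parameter a by the intermediate value theorem
  set A : ℝ := (r/s)^2 + 1 with hAdef
  have hA1 : (1:ℝ) ≤ A := by rw [hAdef]; nlinarith [sq_nonneg (r/s)]
  have hφc : ContinuousOn (fun a => kepT a b r) (Icc 1 A) := fun a haI =>
    (kepT_continuousAt_param b r (lt_of_lt_of_le one_pos haI.1)).continuousWithinAt
  have hφA : kepT A b r ≤ s := by
    have h1 : kepT A b r ≤ r / Real.sqrt A := kepT_le (by positivity) hb hr0.le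
    have h2 : r / s < Real.sqrt A := by
      rw [Real.lt_sqrt (by positivity : (0:ℝ) ≤ r/s), hAdef]
      linarith
    have h3 : r / Real.sqrt A < s := by
      rw [div_lt_iff₀ (Real.sqrt_pos.2 (by positivity))]
      rw [div_lt_iff₀ hs0] at h2
      linarith [h2]
    linarith
  have hφ1 : s ≤ kepT 1 b r := by
    have h1 := kepT_ge (a := 1) one_pos hb hr1
    rw [Real.sqrt_one] at h1
    have h2 : s ≤ (r - 1) / (1 + Real.sqrt b) := by
      rw [le_div_iff₀ (by positivity)]
      nlinarith
    linarith
  obtain ⟨a, haI, hφa⟩ :=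
    intermediate_value_Icc' hA1 hφc (⟨hφA, hφ1⟩ : s ∈ Icc (kepT A b r) (kepT 1 b r))
  have hφa : kepT a b r = s := hφa
  have ha0 : 0 < a := lt_of_lt_of_le one_pos haI.1
  have hsa : 0 < Real.sqrt a := Real.sqrt_pos.2 ha0
  refine ⟨a, ha0, ?_, ?_, ?_⟩
  · have := kepT_le ha0 hb hr0.le
    rw [hφa] at this
    rw [le_div_iff₀ hsa] at this
    linarith
  · have := kepT_ge ha0 hb hr1
    rw [hφa] at this
    rw [div_le_iff₀ (by positivity)] at this
    linarith
  -- construct the arc as the inverse of kepTe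
  set e : ℝ ≃o ℝ := StrictMono.orderIsoOfSurjective (kepTe a b)
    (kepTe_strictMono ha0 hb) (kepTe_surjective ha0 hb) with hedef
  have hecoe : ∀ x, e x = kepTe a b x := fun x => rfl
  set ρ : ℝ → ℝ := fun t => e.symm t with hρdef
  have hρcont : Continuous ρ := (OrderIso.toHomeomorph e.symm).continuous
  have hρleft : ∀ t, kepTe a b (ρ t) = t := fun t => e.apply_symm_apply t
  have hρ0 : ρ 0 = 0 := by
    have h0 : e 0 = 0 := by rw [hecoe, kepTe_of_nonneg le_rfl, kepT_zero]
    calc ρ 0 = e.symm (e 0) := by rw [h0]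
      _ = 0 := e.symm_apply_apply 0
  have hρs : ρ s = r := by
    have h0 : e r = s := by rw [hecoe, kepTe_of_nonneg hr0.le, hφa]
    calc ρ s = e.symm (e r) := by rw [h0]
      _ = r := e.symm_apply_apply r
  have hρmono : StrictMono ρ := e.symm.strictMono
  have hρpos : ∀ t, 0 < t → 0 < ρ t := fun t ht => by
    have := hρmono ht; rwa [hρ0] at this
  -- derivative of ρ
  have hρd : ∀ t, 0 < t →
      HasDerivAt ρ (Real.sqrt (a * ρ t + b) / Real.sqrt (ρ t)) t := by
    intro t ht
    have hx : 0 < ρ t := hρpos t ht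
    have haxb : 0 < a * ρ t + b := by positivity
    have hTe : HasDerivAt (kepTe a b) (Real.sqrt (ρ t) / Real.sqrt (a * ρ t + b)) (ρ t) := by
      refine (kepT_hasDerivAt ha0 hb hx).congr_of_eventuallyEq ?_
      filter_upwards [lt_mem_nhds hx] with y hy
      exact kepTe_of_nonneg (le_of_lt hy)
    have hne : Real.sqrt (ρ t) / Real.sqrt (a * ρ t + b) ≠ 0 := by
      have := Real.sqrt_pos.2 hx
      have := Real.sqrt_pos.2 haxb
      positivity
    have := HasDerivAt.of_local_left_inverse (hρcont.continuousAt) hTe hne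
      (Filter.Eventually.of_forall hρleft)
    rwa [inv_div] at this
  have hderiv1 : ∀ t, 0 < t →
      deriv ρ t = Real.sqrt (a * ρ t + b) / Real.sqrt (ρ t) := fun t ht => (hρd t ht).deriv
  refine ⟨ρ, ⟨hρ0, hρs, hρcont.continuousOn, ?_⟩, ?_⟩
  · -- the ODE
    intro t ht
    refine ⟨hρpos t ht.1, ?_⟩
    have hx : 0 < ρ t := hρpos t ht.1
    have haxb : 0 < a * ρ t + b := by positivity
    have hev : deriv ρ =ᶠ[nhds t] fun u => Real.sqrt (a * ρ u + b) / Real.sqrt (ρ u) := by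
      filter_upwards [lt_mem_nhds ht.1] with y hy
      exact hderiv1 y hy
    rw [hev.deriv_eq]
    -- compute the derivative of u ↦ √(a ρ u + b)/√(ρ u) at t
    have hnum : HasDerivAt (fun u => Real.sqrt (a * ρ u + b))
        (1/(2*Real.sqrt (a * ρ t + b)) * (a * (Real.sqrt (a * ρ t + b) / Real.sqrt (ρ t)))) t := by
      have hin : HasDerivAt (fun u => a * ρ u + b)
          (a * (Real.sqrt (a * ρ t + b) / Real.sqrt (ρ t))) t :=
        ((hρd t ht.1).const_mul a).add_const b
      exact (Real.hasDerivAt_sqrt haxb.ne').comp t hin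
    have hden : HasDerivAt (fun u => Real.sqrt (ρ u))
        (1/(2*Real.sqrt (ρ t)) * (Real.sqrt (a * ρ t + b) / Real.sqrt (ρ t))) t :=
      (Real.hasDerivAt_sqrt hx.ne').comp t (hρd t ht.1)
    have hsx : 0 < Real.sqrt (ρ t) := Real.sqrt_pos.2 hx
    have hdiv := (hnum.fun_div hden hsx.ne').deriv
    rw [hdiv]
    have q1 : Real.sqrt (ρ t) ^ 2 = ρ t := Real.sq_sqrt hx.le
    have q2 : Real.sqrt (a * ρ t + b) ^ 2 = a * ρ t + b := Real.sq_sqrt haxb.le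
    have hs2 : 0 < Real.sqrt (a * ρ t + b) := Real.sqrt_pos.2 haxb
    set s1 := Real.sqrt (ρ t)
    set s2 := Real.sqrt (a * ρ t + b)
    rw [← q1]
    rw [← q1, hbdef] at q2
    field_simp
    linear_combination (-1) * q2
  · -- energy
    intro t ht
    have hx : 0 < ρ t := hρpos t ht.1
    have haxb : 0 < a * ρ t + b := by positivity
    rw [hderiv1 t ht.1, div_pow, Real.sq_sqrt haxb.le, Real.sq_sqrt hx.le]
    rw [hbdef]
    field_simp
    ring

set_option maxHeartbeats 1000000 in
/-- The energy of the unique Kepler solution joining `0` to `r` in time `1+ε`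
satisfies `h(0,r;1+ε) = (1/2)(r/(1+ε))² + o(r²)` as `r → ∞`, uniformly for
`ε ∈ [0,ε̄]`. -/
theorem kepler_energy_asymptotics (U₀ : ℝ) (hU₀ : 0 < U₀)
    (εbar : ℝ) (hεbar : 0 < εbar)
    (h : ℝ → ℝ → ℝ)
    (hh : ∀ ε ∈ Icc (0 : ℝ) εbar, ∀ r > (0 : ℝ), ∀ ρ : ℝ → ℝ,
      IsKeplerArcTime U₀ 0 r (1 + ε) ρ →
      ∀ t ∈ Ioo (0 : ℝ) (1 + ε), (deriv ρ t) ^ 2 / 2 - U₀ / ρ t = h ε r) :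
    ∀ δ > (0 : ℝ), ∃ R : ℝ, ∀ r ≥ R, ∀ ε ∈ Icc (0 : ℝ) εbar,
      |h ε r - (1 / 2) * (r / (1 + ε)) ^ 2| ≤ δ * r ^ 2 := by
  intro δ hδ
  set v : ℝ := Real.sqrt (2*U₀) with hv
  have hv0 : 0 ≤ v := hv ▸ Real.sqrt_nonneg _
  set C : ℝ := 2 + 2*v*(1+εbar) with hC
  have hC0 : 0 < C := by rw [hC]; positivity
  refine ⟨2 + (1+εbar)*(1+v) + C/δ, ?_⟩
  intro r hr ε hε
  set s : ℝ := 1 + ε with hsdef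
  have hs1 : 1 ≤ s := by rw [hsdef]; linarith [hε.1]
  have hs2 : s ≤ 1 + εbar := by rw [hsdef]; linarith [hε.2]
  have hs0 : 0 < s := lt_of_lt_of_le one_pos hs1
  have hrC : C / δ ≤ r := by
    have h1 : 0 ≤ (1+εbar)*(1+v) := by positivity
    linarith
  have hr1 : 1 + s*(1+v) ≤ r := by
    have h1 : s*(1+v) ≤ (1+εbar)*(1+v) := mul_le_mul_of_nonneg_right hs2 (by positivity)
    have h2 : 0 ≤ C/δ := div_nonneg hC0.le hδ.le
    linarith
  have hr0 : 0 < r := by nlinarith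
  obtain ⟨a, ha0, hub, hlb, ρ, harc, hen⟩ :=
    kepler_exists U₀ hU₀ s r hs1 (by rw [hv] at hr1; exact hr1)
  rw [← hv] at hlb
  have hhalf : (2⁻¹:ℝ) ∈ Ioo (0:ℝ) (1+ε) := by
    constructor <;> [norm_num; nlinarith [hε.1]]
  have hval : h ε r = a / 2 := by
    rw [← hh ε hε r hr0 ρ harc 2⁻¹ hhalf]
    exact hen 2⁻¹ hhalf
  rw [hval]
  clear_value C s
  clear hh hen harc
  set u : ℝ := Real.sqrt a with hu
  have hu0 : 0 ≤ u := hu ▸ Real.sqrt_nonneg _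
  have hu2 : u^2 = a := hu ▸ Real.sq_sqrt ha0.le
  clear_value u v
  have hX : (1/2) * (r/s)^2 = r^2/(2*s^2) := by
    rw [div_pow]; ring
  have hkey1 : a * s^2 ≤ r^2 := by nlinarith [hub, mul_nonneg hs0.le hu0]
  have hle : a/2 ≤ r^2/(2*s^2) := by
    rw [div_le_div_iff₀ (by norm_num) (by positivity)]
    nlinarith
  have hCr : C ≤ δ * r := by
    rw [div_le_iff₀ hδ] at hrC
    linarith
  have hkey2 : r^2 - a*s^2 ≤ C * r := by
    have hf1 : r - u*s ≤ 1 + v*s := by nlinarith [hlb]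
    have hf2 : u*s ≤ r := by nlinarith [hub]
    have hf5 : r + u*s ≤ 2*r := by linarith
    have hf6 : 0 ≤ r + u*s := by positivity
    have hf7 : 0 ≤ 1 + v*s := by positivity
    have hf4 : (r - u*s) * (r + u*s) ≤ (1 + v*s) * (2*r) :=
      mul_le_mul hf1 hf5 hf6 hf7
    have he1 : r^2 - a*s^2 = (r - u*s) * (r + u*s) := by rw [← hu2]; ring
    have hvs : v*s ≤ v*(1+εbar) := mul_le_mul_of_nonneg_left hs2 hv0
    have hf8 : (1 + v*s) * (2*r) ≤ C * r := by rw [hC]; nlinarith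
    linarith
  have hhard : r^2/(2*s^2) - a/2 ≤ δ * r^2 := by
    rw [sub_le_iff_le_add, div_le_iff₀ (by positivity : (0:ℝ) < 2*s^2)]
    have hs2' : (1:ℝ) ≤ s^2 := by nlinarith
    nlinarith [mul_nonneg (mul_nonneg hδ.le (sq_nonneg r)) (sub_nonneg.2 hs2'),
      mul_nonneg hC0.le hr0.le]
  rw [hX, abs_le]
  have hpos : 0 ≤ δ * r^2 := by positivity
  constructor <;> linarith
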